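/- Let G* = (V*,E*) be an induced subgraph of G that is r-regular with |V*| = k, and suppose every vertex i ∈ V \ V* has at least r+1 neighbors in V*. Then the strategy x* with x*_i = 1/k for i ∈ V* and x*_i = 0 otherwise is a Nash equilibrium of the social distancing game on G, with equilibrium contact value λ* = (r+1)/k. -/

import Mathlib

open Matrix Finset

/-- Theorem 2.3: the uniform strategy on a maximal r-regular subnetwork, such
that every outside node has at least r+1 links into it, is a Nash equilibrium
with minimal contact (r+1)/k. -/
theorem stmt_3 (n : ℕ) (A : Matrix (Fin n) (Fin n) ℝ)
    (hsym : A.IsSymm)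
    (h01 : ∀ i j, A i j = 0 ∨ A i j = 1)
    (hdiag : ∀ i, A i i = 1)
    (r : ℕ) (Vs : Finset (Fin n)) (hne : Vs.Nonempty)
    (hreg : ∀ i ∈ Vs, (Vs.filter (fun j => j ≠ i ∧ A i j = 1)).card = r)
    (hout : ∀ i, i ∉ Vs → r + 1 ≤ (Vs.filter (fun j => A i j = 1)).card)
    (xstar : Fin n → ℝ)
    (hxstar : xstar = fun i => if i ∈ Vs then ((Vs.card : ℝ))⁻¹ else 0) :
    xstar ∈ stdSimplex ℝ (Fin n) ∧
    (∀ x ∈ stdSimplex ℝ (Fin n),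
        xstar ⬝ᵥ A.mulVec xstar ≤ x ⬝ᵥ A.mulVec xstar) ∧
    xstar ⬝ᵥ A.mulVec xstar = (r + 1 : ℝ) / (Vs.card : ℝ) := by
  subst hxstar
  have hk : (0:ℝ) < (Vs.card : ℝ) := Nat.cast_pos.mpr (Finset.card_pos.mpr hne)
  set k : ℝ := (Vs.card : ℝ) with hkdef
  -- sums of 0/1 rows equal cardinalities of filters
  have sum01 : ∀ i, ∑ j ∈ Vs, A i j = ((Vs.filter (fun j => A i j = 1)).card : ℝ) := by
    intro i
    rw [Finset.card_filter]
    push_cast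
    refine Finset.sum_congr rfl fun j hj => ?_
    rcases h01 i j with h | h <;> simp [h]
  have hcard_in : ∀ i ∈ Vs, (Vs.filter (fun j => A i j = 1)).card = r + 1 := by
    intro i hi
    have hmem : i ∈ Vs.filter (fun j => A i j = 1) := by
      simp [Finset.mem_filter, hi, hdiag i]
    have hpos : 1 ≤ (Vs.filter (fun j => A i j = 1)).card :=
      Finset.card_pos.mpr ⟨i, hmem⟩
    have herase : (Vs.filter (fun j => A i j = 1)).erase i
        = Vs.filter (fun j => j ≠ i ∧ A i j = 1) := by
      ext j
      simp only [Finset.mem_erase, Finset.mem_filter]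
      tauto
    have := hreg i hi
    rw [← herase, Finset.card_erase_of_mem hmem] at this
    omega
  -- mulVec formula
  have hAx : ∀ i, A.mulVec (fun i => if i ∈ Vs then k⁻¹ else 0) i
      = (∑ j ∈ Vs, A i j) * k⁻¹ := by
    intro i
    simp only [Matrix.mulVec, dotProduct]
    calc ∑ j, A i j * (if j ∈ Vs then k⁻¹ else 0)
        = ∑ j, (if j ∈ Vs then A i j * k⁻¹ else 0) := by
          refine Finset.sum_congr rfl fun j _ => ?_
          split <;> simp
      _ = ∑ j ∈ univ ∩ Vs, A i j * k⁻¹ := Finset.sum_ite_mem _ _ _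
      _ = (∑ j ∈ Vs, A i j) * k⁻¹ := by rw [Finset.univ_inter, Finset.sum_mul]
  have hAx_in : ∀ i ∈ Vs, A.mulVec (fun i => if i ∈ Vs then k⁻¹ else 0) i
      = ((r:ℝ) + 1) * k⁻¹ := by
    intro i hi
    rw [hAx, sum01, hcard_in i hi]
    push_cast
    ring
  have hAx_ge : ∀ i, ((r:ℝ) + 1) * k⁻¹ ≤ A.mulVec (fun i => if i ∈ Vs then k⁻¹ else 0) i := by
    intro i
    by_cases hi : i ∈ Vs
    · rw [hAx_in i hi]
    · rw [hAx, sum01]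
      have := hout i hi
      have h1 : ((r:ℝ) + 1) ≤ ((Vs.filter (fun j => A i j = 1)).card : ℝ) := by
        exact_mod_cast this
      exact mul_le_mul_of_nonneg_right h1 (inv_nonneg.mpr hk.le)
  -- value computation
  have hval : (fun i => if i ∈ Vs then k⁻¹ else 0) ⬝ᵥ
      A.mulVec (fun i => if i ∈ Vs then k⁻¹ else 0) = ((r:ℝ) + 1) / k := by
    simp only [dotProduct]
    calc ∑ i, (if i ∈ Vs then k⁻¹ else 0) * A.mulVec (fun i => if i ∈ Vs then k⁻¹ else 0) i
        = ∑ i, (if i ∈ Vs then k⁻¹ * A.mulVec (fun i => if i ∈ Vs then k⁻¹ else 0) i else 0) := by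
          refine Finset.sum_congr rfl fun i _ => ?_
          split <;> simp
      _ = ∑ i ∈ univ ∩ Vs, k⁻¹ * A.mulVec (fun i => if i ∈ Vs then k⁻¹ else 0) i :=
          Finset.sum_ite_mem _ _ _
      _ = ∑ i ∈ Vs, k⁻¹ * (((r:ℝ) + 1) * k⁻¹) := by
          rw [Finset.univ_inter]
          exact Finset.sum_congr rfl fun i hi => by rw [hAx_in i hi]
      _ = ((r:ℝ) + 1) / k := by
          rw [Finset.sum_const, nsmul_eq_mul, ← hkdef]
          field_simp
  refine ⟨?_, ?_, by rw [hval]⟩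
  · refine ⟨fun i => ?_, ?_⟩
    · dsimp only
      split
      · positivity
      · exact le_refl 0
    · calc ∑ i, (fun i => if i ∈ Vs then k⁻¹ else 0) i
          = ∑ i ∈ univ ∩ Vs, k⁻¹ := Finset.sum_ite_mem _ _ _
        _ = 1 := by
            rw [Finset.univ_inter, Finset.sum_const, nsmul_eq_mul, ← hkdef]
            exact mul_inv_cancel₀ hk.ne'
  · intro x hx
    rw [hval]
    calc ((r:ℝ) + 1) / k = (∑ i, x i) * (((r:ℝ) + 1) * k⁻¹) := by
          rw [hx.2]; ring
      _ = ∑ i, x i * (((r:ℝ) + 1) * k⁻¹) := by rw [Finset.sum_mul]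
      _ ≤ ∑ i, x i * A.mulVec (fun i => if i ∈ Vs then k⁻¹ else 0) i :=
          Finset.sum_le_sum fun i _ => mul_le_mul_of_nonneg_left (hAx_ge i) (hx.1 i)
      _ = _ := rfl
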